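/- Let n ≥ 2, let A = K[x]/(x^{n+1}) with maximal ideal m = (x), and for an integer i with 1 < i ≤ n let U_i = span_K{x, x², …, x^{i−1}, x^{i+1}, …, x^n}; then (A, U_i) is an H-pair of degree i. The boundary set B = {z ∈ m : z ≠ 0 and z^i ∈ U_i} has only finitely many U_i-equivalence classes if and only if i = n−1 or i = n. -/

import Mathlib

set_option synthInstance.maxHeartbeats 1000000
set_option maxHeartbeats 2000000
set_option linter.unusedSectionVars false


/-- The exponential of an element of a finite-dimensional `K`-algebra:
`exp a = ∑_{i ≥ 0} a^i / i!`. -/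
noncomputable def expn (K : Type*) [Field K] {A : Type*} [CommRing A] [Algebra K A]
    (a : A) : A :=
  ∑ i ∈ Finset.range (Module.finrank K A + 1), ((i.factorial : K)⁻¹) • a ^ i

/-- The truncated polynomial algebra `K[x]/(x^{n+1})`. -/
abbrev TruncPoly (K : Type*) [Field K] (n : ℕ) : Type _ :=
  Polynomial K ⧸ Ideal.span {(Polynomial.X : Polynomial K) ^ (n + 1)}

/-- The image of `x` in `K[x]/(x^{n+1})`. -/
noncomputable abbrev truncX (K : Type*) [Field K] (n : ℕ) : TruncPoly K n :=
  Ideal.Quotient.mk (Ideal.span {(Polynomial.X : Polynomial K) ^ (n + 1)}) Polynomial.X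

namespace Stmt12
open Polynomial Finset

variable (K : Type*) [Field K] [CharZero K] (n : ℕ)

noncomputable def pb : PowerBasis K (TruncPoly K n) :=
  AdjoinRoot.powerBasis (f := (X : K[X]) ^ (n + 1)) (pow_ne_zero _ X_ne_zero)

lemma pb_dim : (pb K n).dim = n + 1 := by
  simp [pb, AdjoinRoot.powerBasis]

lemma pb_gen : (pb K n).gen = truncX K n := rfl

lemma finrank_A : Module.finrank K (TruncPoly K n) = n + 1 := by
  rw [PowerBasis.finrank (pb K n), pb_dim]

noncomputable def bb : Module.Basis (Fin (n + 1)) K (TruncPoly K n) :=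
  (pb K n).basis.reindex (finCongr (pb_dim K n))

lemma bb_apply (j : Fin (n + 1)) : bb K n j = truncX K n ^ (j : ℕ) := by
  simp [bb, Module.Basis.reindex_apply, PowerBasis.coe_basis, pb_gen]

/-- `x^(n+1) = 0`. -/
lemma x_pow_zero : truncX K n ^ (n + 1) = 0 := by
  rw [← map_pow, Ideal.Quotient.eq_zero_iff_mem]
  exact Ideal.subset_span rfl

lemma x_pow_zero' {k : ℕ} (hk : n + 1 ≤ k) : truncX K n ^ k = 0 := by
  obtain ⟨m, rfl⟩ := Nat.exists_eq_add_of_le hk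
  rw [pow_add, x_pow_zero, zero_mul]

/-- coefficient functionals -/
noncomputable def cf (j : ℕ) : TruncPoly K n →ₗ[K] K :=
  if h : j < n + 1 then bb K n |>.coord ⟨j, h⟩ else 0

lemma cf_x_pow (j k : ℕ) :
    cf K n j (truncX K n ^ k) = if j = k ∧ k ≤ n then 1 else 0 := by
  by_cases hk : k ≤ n
  · have : truncX K n ^ k = bb K n ⟨k, by omega⟩ := (bb_apply K n ⟨k, by omega⟩).symm
    rw [this]
    unfold cf
    by_cases hj : j < n + 1
    · rw [dif_pos hj]
      rw [Module.Basis.coord_apply, Module.Basis.repr_self]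
      rw [Finsupp.single_apply]
      simp only [Fin.mk.injEq]
      by_cases h : j = k
      · simp [h, hk]
      · rw [if_neg (by simpa [Fin.ext_iff] using Ne.symm h), if_neg (by tauto)]
    · rw [dif_neg hj]
      simp only [LinearMap.zero_apply]
      rw [if_neg (by omega)]
  · rw [x_pow_zero' K n (by omega), map_zero, if_neg (by omega)]

lemma repr_sum (z : TruncPoly K n) :
    z = ∑ k ∈ range (n + 1), cf K n k z • truncX K n ^ k := by
  conv_lhs => rw [← Module.Basis.sum_repr (bb K n) z]
  rw [Finset.sum_range fun k => cf K n k z • truncX K n ^ k]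
  apply Finset.sum_congr rfl
  intro j _
  rw [bb_apply]
  congr 1
  unfold cf
  rw [dif_pos j.isLt]
  rfl

lemma eq_zero_of_cf (z : TruncPoly K n) (h : ∀ k ≤ n, cf K n k z = 0) : z = 0 := by
  rw [repr_sum K n z]
  apply Finset.sum_eq_zero
  intro k hk
  rw [h k (by simpa using Nat.lt_succ_iff.mp (mem_range.mp hk)), zero_smul]


/-- Convolution formula for coefficients of a product. -/
lemma cf_mul {m : ℕ} (hm : m ≤ n) (z w : TruncPoly K n) :
    cf K n m (z * w) = ∑ p ∈ range (m + 1), cf K n p z * cf K n (m - p) w := by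
  conv_lhs => rw [repr_sum K n z, repr_sum K n w]
  rw [Finset.sum_mul_sum]
  rw [map_sum]
  have hterm : ∀ k ∈ range (n+1), cf K n m
      (∑ l ∈ range (n+1), (cf K n k z • truncX K n ^ k) * (cf K n l w • truncX K n ^ l))
      = if k ≤ m then cf K n k z * cf K n (m - k) w else 0 := by
    intro k hk
    rw [map_sum]
    have : ∀ l ∈ range (n+1),
        cf K n m ((cf K n k z • truncX K n ^ k) * (cf K n l w • truncX K n ^ l))
        = if l = m - k ∧ k ≤ m then cf K n k z * cf K n (m - k) w else 0 := by
      intro l hl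
      rw [smul_mul_smul_comm, ← pow_add, map_smul, cf_x_pow]
      simp only [mem_range] at hk hl
      by_cases h : l = m - k ∧ k ≤ m
      · obtain ⟨h1, h2⟩ := h
        rw [if_pos (⟨by omega, by omega⟩ : m = k + l ∧ k + l ≤ n), if_pos ⟨h1, h2⟩]
        rw [smul_eq_mul, mul_one, h1]
      · rw [if_neg h, if_neg (by omega)]
        simp
    rw [Finset.sum_congr rfl this]
    by_cases hkm : k ≤ m
    · rw [Finset.sum_eq_single (m - k)]
      · simp [hkm]
      · intro l _ hl; rw [if_neg (by tauto)]
      · intro h; exact absurd (mem_range.mpr (by omega)) h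
    · rw [if_neg hkm]
      apply Finset.sum_eq_zero
      intro l _; rw [if_neg (by tauto)]
  rw [Finset.sum_congr rfl hterm]
  rw [← Finset.sum_filter]
  apply Finset.sum_congr
  · ext p; simp [mem_filter]; omega
  · intro p _; rfl


lemma mem_Mpow {k : ℕ} {z : TruncPoly K n} :
    z ∈ (Ideal.span {truncX K n}) ^ k ↔ ∀ j ≤ n, j < k → cf K n j z = 0 := by
  rw [Ideal.span_singleton_pow]
  constructor
  · intro hz j hj hjk
    obtain ⟨w, rfl⟩ := Ideal.mem_span_singleton'.mp hz
    rw [cf_mul K n hj]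
    apply Finset.sum_eq_zero
    intro p hp
    rw [cf_x_pow, if_neg (by simp at hp; omega), mul_zero]
  · intro h
    rw [repr_sum K n z]
    apply Ideal.sum_mem
    intro j hj
    simp only [mem_range] at hj
    by_cases hjk : j < k
    · rw [h j (by omega) hjk, zero_smul]; exact Ideal.zero_mem _
    · have : truncX K n ^ j = truncX K n ^ (j - k) * truncX K n ^ k := by
        rw [← pow_add]; congr 1; omega
      rw [this]
      exact Submodule.smul_of_tower_mem _ _
        (Ideal.mem_span_singleton'.mpr ⟨truncX K n ^ (j - k), rfl⟩)

lemma mem_M_iff {z : TruncPoly K n} :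
    z ∈ Ideal.span {truncX K n} ↔ cf K n 0 z = 0 := by
  have := mem_Mpow K n (k := 1) (z := z)
  rw [Submodule.pow_one] at this
  rw [this]
  constructor
  · intro h; exact h 0 (by omega) (by omega)
  · intro h j _ hj; interval_cases j; exact h

lemma cf_one (j : ℕ) : cf K n j 1 = if j = 0 then 1 else 0 := by
  have := cf_x_pow K n j 0
  rw [pow_zero] at this
  rw [this]
  congr 1
  simp

lemma nilpotent_of_mem_M {z : TruncPoly K n} (hz : z ∈ Ideal.span {truncX K n}) :
    z ^ (n + 1) = 0 := by
  obtain ⟨w, rfl⟩ := Ideal.mem_span_singleton'.mp hz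
  rw [mul_pow, x_pow_zero, mul_zero]

lemma isUnit_of_cf0 {z : TruncPoly K n} (hz : cf K n 0 z ≠ 0) : IsUnit z := by
  have h1 : z = cf K n 0 z • 1 + (z - cf K n 0 z • 1) := by ring
  have h2 : z - cf K n 0 z • 1 ∈ Ideal.span {truncX K n} := by
    rw [mem_M_iff, map_sub, map_smul, cf_one]
    simp
  have h3 : IsNilpotent (z - cf K n 0 z • 1) := ⟨n + 1, nilpotent_of_mem_M K n h2⟩
  have h4 : IsUnit ((cf K n 0 z • 1 : TruncPoly K n)) := by
    rw [← Algebra.algebraMap_eq_smul_one]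
    exact (isUnit_iff_ne_zero.mpr hz).map (algebraMap K (TruncPoly K n))
  rw [h1]
  exact h3.isUnit_add_left_of_commute h4 (Commute.all _ _)

lemma mem_U_iff (i : ℕ) (hi1 : 1 ≤ i) (hin : i ≤ n) {z : TruncPoly K n} :
    z ∈ Submodule.span K ((fun j : ℕ => truncX K n ^ j) '' {j : ℕ | 1 ≤ j ∧ j ≤ n ∧ j ≠ i})
      ↔ cf K n 0 z = 0 ∧ cf K n i z = 0 := by
  constructor
  · intro hz
    have : Submodule.span K ((fun j : ℕ => truncX K n ^ j) '' {j : ℕ | 1 ≤ j ∧ j ≤ n ∧ j ≠ i})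
        ≤ LinearMap.ker (cf K n 0) ⊓ LinearMap.ker (cf K n i) := by
      rw [Submodule.span_le]
      rintro - ⟨j, ⟨hj1, hj2, hj3⟩, rfl⟩
      constructor <;> simp only [SetLike.mem_coe, LinearMap.mem_ker, cf_x_pow]
      · rw [if_neg (by omega)]
      · rw [if_neg (by tauto)]
    exact this hz
  · rintro ⟨h0, hi⟩
    rw [repr_sum K n z]
    apply Submodule.sum_mem
    intro j hj
    simp only [mem_range] at hj
    by_cases hj0 : j = 0
    · subst hj0; rw [h0, zero_smul]; exact Submodule.zero_mem _
    by_cases hji : j = i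
    · subst hji; rw [hi, zero_smul]; exact Submodule.zero_mem _
    · exact Submodule.smul_mem _ _ (Submodule.subset_span ⟨j, ⟨by omega, by omega, hji⟩, rfl⟩)


lemma cf0_mul (z w : TruncPoly K n) :
    cf K n 0 (z * w) = cf K n 0 z * cf K n 0 w := by
  rw [cf_mul K n (by omega)]
  simp

lemma expn_eq (a : TruncPoly K n) :
    expn K a = ∑ m ∈ range (n + 2), ((m.factorial : K)⁻¹) • a ^ m := by
  rw [expn, finrank_A]

lemma expn_zero : expn K (0 : TruncPoly K n) = 1 := by
  rw [expn_eq, Finset.sum_eq_single 0]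
  · simp
  · intro m _ hm
    rw [zero_pow hm, smul_zero]
  · intro h; exact absurd (mem_range.mpr (by omega)) h

lemma mul_pow_eq_zero {a b : TruncPoly K n} (ha : a ∈ Ideal.span {truncX K n})
    (hb : b ∈ Ideal.span {truncX K n}) {p q : ℕ} (h : n + 1 ≤ p + q) :
    a ^ p * b ^ q = 0 := by
  obtain ⟨w, rfl⟩ := Ideal.mem_span_singleton'.mp ha
  obtain ⟨v, rfl⟩ := Ideal.mem_span_singleton'.mp hb
  have : (w * truncX K n) ^ p * (v * truncX K n) ^ q
      = truncX K n ^ p * truncX K n ^ q * (w ^ p * v ^ q) := by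
    rw [mul_pow, mul_pow]; ring
  rw [this, ← pow_add, x_pow_zero' K n h, zero_mul]

lemma expn_add {a b : TruncPoly K n} (ha : a ∈ Ideal.span {truncX K n})
    (hb : b ∈ Ideal.span {truncX K n}) :
    expn K a * expn K b = expn K (a + b) := by
  classical
  set f : ℕ × ℕ → TruncPoly K n :=
    fun pq => ((pq.1.factorial : K)⁻¹ * (pq.2.factorial : K)⁻¹) • (a ^ pq.1 * b ^ pq.2) with hf
  have fact_ne : ∀ m : ℕ, (m.factorial : K) ≠ 0 := fun m =>
    Nat.cast_ne_zero.mpr m.factorial_ne_zero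
  have hLHS : expn K a * expn K b = ∑ pq ∈ range (n+2) ×ˢ range (n+2), f pq := by
    rw [expn_eq, expn_eq, Finset.sum_mul_sum, Finset.sum_product]
    apply Finset.sum_congr rfl; intro p _
    apply Finset.sum_congr rfl; intro q _
    rw [hf, smul_mul_smul_comm]
  have hRHS : expn K (a + b)
      = ∑ m ∈ range (n+2), ∑ p ∈ range (m+1), f (p, m - p) := by
    rw [expn_eq]
    apply Finset.sum_congr rfl; intro m _
    rw [add_pow, Finset.smul_sum]
    apply Finset.sum_congr rfl; intro p hp
    simp only [mem_range] at hp
    have hpm : p ≤ m := by omega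
    rw [hf]
    simp only
    have hc : (m.choose p : K) ≠ 0 := Nat.cast_ne_zero.mpr (Nat.choose_pos hpm).ne'
    have key : ((m.factorial : K)⁻¹) * (m.choose p : K)
        = (p.factorial : K)⁻¹ * ((m - p).factorial : K)⁻¹ := by
      have h2 : (m.choose p : K) * p.factorial * (m - p).factorial = m.factorial := by
        exact_mod_cast congrArg (Nat.cast : ℕ → K) (Nat.choose_mul_factorial_mul_factorial hpm)
      field_simp
      rw [div_eq_div_iff (fact_ne m) (mul_ne_zero (fact_ne p) (fact_ne (m - p)))]
      linear_combination h2
    calc (m.factorial : K)⁻¹ • (a ^ p * b ^ (m - p) * (m.choose p : TruncPoly K n))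
        = ((m.factorial : K)⁻¹ * (m.choose p : K)) • (a ^ p * b ^ (m - p)) := by
          rw [mul_comm (a ^ p * b ^ (m - p)), ← nsmul_eq_mul,
            ← Nat.cast_smul_eq_nsmul K, smul_smul]
      _ = ((p.factorial : K)⁻¹ * ((m - p).factorial : K)⁻¹) • (a ^ p * b ^ (m - p)) := by
          rw [key]
  rw [hLHS, hRHS]
  have hzero : ∀ pq ∈ (range (n+2) ×ˢ range (n+2)).filter
      (fun pq : ℕ × ℕ => ¬ pq.1 + pq.2 < n + 2), f pq = 0 := by
    intro pq hpq
    simp only [mem_filter, mem_product, mem_range, not_lt] at hpq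
    rw [hf]
    simp only
    rw [mul_pow_eq_zero K n ha hb (by omega), smul_zero]
  rw [← Finset.sum_filter_add_sum_filter_not (range (n+2) ×ˢ range (n+2))
    (fun pq : ℕ × ℕ => pq.1 + pq.2 < n + 2) f, Finset.sum_eq_zero hzero, add_zero]
  rw [Finset.sum_sigma']
  refine Finset.sum_nbij' (i := fun pq : ℕ × ℕ => (⟨pq.1 + pq.2, pq.1⟩ : Σ _ : ℕ, ℕ))
    (j := fun x : Σ _ : ℕ, ℕ => (x.2, x.1 - x.2)) ?_ ?_ ?_ ?_ ?_
  · rintro ⟨p, q⟩ h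
    simp only [mem_filter, mem_product, mem_range] at h
    simp only [Finset.mem_sigma, mem_range]
    omega
  · rintro ⟨m, p⟩ h
    simp only [Finset.mem_sigma, mem_range] at h
    simp only [mem_filter, mem_product, mem_range]
    omega
  · rintro ⟨p, q⟩ h
    simp
  · rintro ⟨m, p⟩ h
    simp only [Finset.mem_sigma, mem_range] at h
    simp only [Sigma.mk.inj_iff]
    exact ⟨by omega, heq_of_eq rfl⟩
  · rintro ⟨p, q⟩ h
    simp

lemma cf0_pow (a : TruncPoly K n) (m : ℕ) : cf K n 0 (a ^ m) = (cf K n 0 a) ^ m := by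
  induction m with
  | zero => simp [cf_one]
  | succ k ih => simp only [pow_succ, cf0_mul, ih]

lemma expn_factor {a : TruncPoly K n} (ha : a ∈ Ideal.span {truncX K n}) :
    ∃ g : TruncPoly K n, expn K a = 1 + a * g ∧ cf K n 0 g = 1 := by
  refine ⟨∑ m ∈ range (n+1), (((m+1).factorial : K)⁻¹) • a ^ m, ?_, ?_⟩
  · rw [expn_eq, Finset.sum_range_succ']
    simp only [pow_zero, Nat.factorial_zero, Nat.cast_one, inv_one, one_smul]
    rw [add_comm]
    congr 1
    rw [Finset.mul_sum]
    apply Finset.sum_congr rfl; intro m _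
    rw [mul_smul_comm, ← pow_succ']
  · rw [map_sum, Finset.sum_eq_single 0]
    · simp [cf_one]
    · intro m _ hm
      rw [map_smul, cf0_pow, (mem_M_iff K n).mp ha, zero_pow hm, smul_zero]
    · intro h; exact absurd (mem_range.mpr (by omega)) h


lemma smul_def' (c : K) (z : TruncPoly K n) :
    c • z = algebraMap K (TruncPoly K n) c * z := by
  rw [algebra_compatible_smul (TruncPoly K n) c z, smul_eq_mul]

lemma expn_quad (a : TruncPoly K n) :
    ∃ g : TruncPoly K n, expn K a = 1 + a + a ^ 2 * g := by
  refine ⟨∑ m ∈ range n, (((m+2).factorial : K)⁻¹) • a ^ m, ?_⟩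
  rw [expn_eq, Finset.sum_range_succ', Finset.sum_range_succ']
  simp only [pow_zero, pow_one, Nat.factorial_zero, Nat.factorial_one, Nat.cast_one,
    inv_one, one_smul]
  rw [Finset.mul_sum]
  have : ∀ m ∈ range n, (((m + 1 + 1).factorial : K)⁻¹) • a ^ (m + 1 + 1)
      = a ^ 2 * (((m+2).factorial : K)⁻¹ • a ^ m) := by
    intro m _
    rw [mul_smul_comm]
    congr 1
    rw [← pow_add]
    congr 1
    omega
  rw [Finset.sum_congr rfl this]
  simp only [zero_add, pow_one, Nat.factorial_one, Nat.cast_one, inv_one, one_smul]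
  ring

lemma span_Icc_le_M (k : ℕ) :
    Submodule.span K ((fun j : ℕ => truncX K n ^ j) '' Set.Icc 1 k)
      ≤ (Ideal.span {truncX K n}).restrictScalars K := by
  rw [Submodule.span_le]
  rintro - ⟨j, ⟨hj1, _⟩, rfl⟩
  have : truncX K n ^ j = truncX K n ^ (j - 1) * truncX K n ^ 1 := by
    rw [← pow_add]; congr 1; omega
  simp only [SetLike.mem_coe, Submodule.restrictScalars_mem]
  rw [this, pow_one]
  exact Ideal.mem_span_singleton'.mpr ⟨_, rfl⟩

lemma pow_smul_mem_Mpow (c : K) (m : ℕ) :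
    c • truncX K n ^ m ∈ (Ideal.span {truncX K n}) ^ m := by
  apply Submodule.smul_of_tower_mem
  rw [Ideal.span_singleton_pow]
  exact Ideal.mem_span_singleton'.mpr ⟨1, one_mul _⟩

lemma kill (k : ℕ) (hk1 : 1 ≤ k) :
    ∀ t : ℕ, k + t ≤ n → ∀ z : TruncPoly K n, ∀ c : K, c ≠ 0 →
    z - c • truncX K n ^ k ∈ (Ideal.span {truncX K n}) ^ (n + 1 - t) →
    ∃ u ∈ Submodule.span K ((fun j : ℕ => truncX K n ^ j) '' Set.Icc 1 (n - k)),
      expn K u * z = c • truncX K n ^ k := by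
  intro t
  induction t with
  | zero =>
    intro _ z c _ hz
    have : z - c • truncX K n ^ k = 0 := by
      apply eq_zero_of_cf
      intro j hj
      exact (mem_Mpow K n).mp hz j hj (by omega)
    refine ⟨0, Submodule.zero_mem _, ?_⟩
    rw [expn_zero, one_mul, sub_eq_zero.mp this]
  | succ t ih =>
    intro hkt z c hc hz
    set x := truncX K n with hx
    set d := n - t with hd
    have hdk : k + 1 ≤ d := by omega
    have hdn : d ≤ n := by omega
    have hd1 : n + 1 - (t + 1) = d := by omega
    rw [hd1] at hz
    set e := cf K n d (z - c • x ^ k) with he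
    set m := d - k with hm
    have hm1 : 1 ≤ m := by omega
    have hmn : m ≤ n - k := by omega
    set u₀ := (-(e / c)) • x ^ m with hu0
    have hu0Mm : u₀ ∈ (Ideal.span {x}) ^ m := pow_smul_mem_Mpow K n _ m
    have hu0M : u₀ ∈ Ideal.span {x} := by
      have h2 : (Ideal.span {x}) ^ m ≤ (Ideal.span {x}) ^ 1 :=
        Ideal.pow_le_pow_right hm1
      rw [pow_one] at h2
      exact h2 hu0Mm
    have hzM : z ∈ (Ideal.span {x}) ^ k := by
      have h2 : z - c • x ^ k ∈ (Ideal.span {x}) ^ k :=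
        Ideal.pow_le_pow_right (by omega) hz
      have := add_mem h2 (pow_smul_mem_Mpow K n c k)
      rwa [sub_add_cancel] at this
    obtain ⟨g, hg⟩ := expn_quad K n u₀
    have h1 : (algebraMap K (TruncPoly K n)) c * (algebraMap K (TruncPoly K n)) (-(e/c))
        = - algebraMap K (TruncPoly K n) e := by
      rw [← map_mul, (by field_simp : c * -(e/c) = -e), map_neg]
    have h2 : x ^ m * x ^ k = x ^ d := by
      rw [← pow_add]; congr 1; omega
    have hid : expn K u₀ * z - c • x ^ k
        = ((z - c • x ^ k) - e • x ^ d) + (u₀ * (z - c • x ^ k) + u₀ ^ 2 * (g * z)) := by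
      rw [hg, hu0]
      simp only [smul_def' K n]
      linear_combination (x ^ m * x ^ k) * h1 - (algebraMap K (TruncPoly K n) e) * h2
    have mem1 : (z - c • x ^ k) - e • x ^ d ∈ (Ideal.span {x}) ^ (d + 1) := by
      rw [mem_Mpow]
      intro j hj hjd
      rw [map_sub, map_smul, cf_x_pow]
      by_cases hjd' : j = d
      · subst hjd'
        rw [if_pos ⟨rfl, hdn⟩, ← he]
        simp
      · rw [(mem_Mpow K n).mp hz j hj (by omega), if_neg (by tauto)]
        simp
    have mem2 : u₀ * (z - c • x ^ k) ∈ (Ideal.span {x}) ^ (d + 1) := by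
      have := Ideal.mul_mem_mul hu0Mm hz
      rw [← Submodule.pow_add _ (by omega)] at this
      exact Ideal.pow_le_pow_right (by omega) this
    have mem3 : u₀ ^ 2 * (g * z) ∈ (Ideal.span {x}) ^ (d + 1) := by
      have hsq : u₀ ^ 2 ∈ (Ideal.span {x}) ^ (m + m) := by
        have h := Ideal.mul_mem_mul hu0Mm hu0Mm
        rw [← Submodule.pow_add _ (by omega)] at h
        rwa [pow_two]
      have hgz : g * z ∈ (Ideal.span {x}) ^ k := Ideal.mul_mem_left _ g hzM
      have := Ideal.mul_mem_mul hsq hgz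
      rw [← Submodule.pow_add _ (by omega)] at this
      exact Ideal.pow_le_pow_right (by omega) this
    have key : expn K u₀ * z - c • x ^ k ∈ (Ideal.span {x}) ^ (n + 1 - t) := by
      have : n + 1 - t = d + 1 := by omega
      rw [this, hid]
      exact add_mem mem1 (add_mem mem2 mem3)
    obtain ⟨u₁, hu₁, hu₁eq⟩ := ih (by omega) (expn K u₀ * z) c hc key
    refine ⟨u₁ + u₀, ?_, ?_⟩
    · exact Submodule.add_mem _ hu₁
        (Submodule.smul_mem _ _ (Submodule.subset_span ⟨m, ⟨hm1, hmn⟩, rfl⟩))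
    · rw [← expn_add K n (span_Icc_le_M K n (n-k) hu₁) hu0M, mul_assoc, hu₁eq]


lemma cf_high {j : ℕ} (hj : n < j) (z : TruncPoly K n) : cf K n j z = 0 := by
  unfold cf
  rw [dif_neg (by omega)]
  rfl

lemma cf_pow_self {z : TruncPoly K n} (hz : z ∈ Ideal.span {truncX K n}) :
    ∀ k, 1 ≤ k → k ≤ n → cf K n k (z ^ k) = (cf K n 1 z) ^ k := by
  intro k hk1
  induction k, hk1 using Nat.le_induction with
  | base => intro _; rw [pow_one, pow_one]
  | succ k hk ih =>
    intro hkn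
    rw [pow_succ' z k, cf_mul K n (by omega), Finset.sum_eq_single 1]
    · have h' : k + 1 - 1 = k := by omega
      rw [h', ih (by omega), ← pow_succ']
    · intro p hp hp1
      simp only [mem_range] at hp
      by_cases hp0 : p = 0
      · subst hp0
        rw [(mem_M_iff K n).mp hz, zero_mul]
      · have hzk : z ^ k ∈ (Ideal.span {truncX K n}) ^ k := Ideal.pow_mem_pow hz k
        rw [(mem_Mpow K n).mp hzk (k + 1 - p) (by omega) (by omega), mul_zero]
    · intro h
      exact absurd (mem_range.mpr (by omega)) h

lemma cf_xpow_mul (s j : ℕ) (hsj : s + j ≤ n) (g : TruncPoly K n) :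
    cf K n (s + j) (truncX K n ^ s * g) = cf K n j g := by
  rw [cf_mul K n hsj, Finset.sum_eq_single s]
  · rw [cf_x_pow, if_pos ⟨rfl, by omega⟩, one_mul]
    have h' : s + j - s = j := by omega
    rw [h']
  · intro p _ hp
    rw [cf_x_pow, if_neg (by tauto), zero_mul]
  · intro h
    exact absurd (mem_range.mpr (by omega)) h

lemma cf0_expn {a : TruncPoly K n} (ha : a ∈ Ideal.span {truncX K n}) :
    cf K n 0 (expn K a) = 1 := by
  obtain ⟨g, hg, -⟩ := expn_factor K n ha
  rw [hg, map_add, cf_one, cf0_mul, (mem_M_iff K n).mp ha, zero_mul, add_zero]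
  simp

lemma exists_least {z : TruncPoly K n} (hz : z ≠ 0) :
    ∃ k ≤ n, cf K n k z ≠ 0 ∧ ∀ j < k, cf K n j z = 0 := by
  have hex : ∃ j, cf K n j z ≠ 0 := by
    by_contra h
    push_neg at h
    exact hz (eq_zero_of_cf K n z fun k _ => h k)
  classical
  refine ⟨Nat.find hex, ?_, Nat.find_spec hex, fun j hj => ?_⟩
  · by_contra h
    exact Nat.find_spec hex (cf_high K n (by omega) z)
  · by_contra h
    exact absurd hj (not_lt.mpr (Nat.find_le h))

lemma U_le_M (i : ℕ) (hi1 : 1 ≤ i) (hin : i ≤ n) :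
    Submodule.span K ((fun j : ℕ => truncX K n ^ j) '' {j : ℕ | 1 ≤ j ∧ j ≤ n ∧ j ≠ i})
      ≤ (Ideal.span {truncX K n}).restrictScalars K := by
  rw [Submodule.span_le]
  rintro - ⟨j, ⟨hj1, hj2, hj3⟩, rfl⟩
  simp only [SetLike.mem_coe, Submodule.restrictScalars_mem]
  have : truncX K n ^ j = truncX K n ^ (j - 1) * truncX K n := by
    rw [← pow_succ]
    congr 1
    omega
  rw [this]
  exact Ideal.mem_span_singleton'.mpr ⟨_, rfl⟩

lemma Mpow_le_U (i : ℕ) (hi1 : 1 ≤ i) (hin : i ≤ n) (k : ℕ) (hk : i < k) :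
    ((Ideal.span {truncX K n}) ^ k).restrictScalars K ≤
      Submodule.span K ((fun j : ℕ => truncX K n ^ j) '' {j : ℕ | 1 ≤ j ∧ j ≤ n ∧ j ≠ i}) := by
  intro z hz
  rw [Submodule.restrictScalars_mem] at hz
  rw [mem_U_iff K n i hi1 hin]
  exact ⟨(mem_Mpow K n).mp hz 0 (by omega) (by omega),
    (mem_Mpow K n).mp hz i (by omega) (by omega)⟩

lemma finrank_U (i : ℕ) (hi1 : 1 ≤ i) (hin : i ≤ n) :
    Module.finrank K (Submodule.span K
      ((fun j : ℕ => truncX K n ^ j) '' {j : ℕ | 1 ≤ j ∧ j ≤ n ∧ j ≠ i})) = n - 1 := by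
  classical
  set G : Finset ℕ := (Finset.Icc 1 n).erase i with hG
  have hset : ((fun j : ℕ => truncX K n ^ j) '' {j : ℕ | 1 ≤ j ∧ j ≤ n ∧ j ≠ i})
      = ↑(G.image (fun j => truncX K n ^ j)) := by
    rw [Finset.coe_image]
    congr 1
    ext j
    simp [hG, Finset.mem_erase, Finset.mem_Icc]
    tauto
  rw [hset]
  have hinj : Set.InjOn (fun j => truncX K n ^ j) ↑G := by
    intro a ha b hb hab
    simp only [hG, Finset.coe_erase, Set.mem_diff, Finset.coe_Icc, Set.mem_Icc] at ha hb
    by_contra hne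
    have h1 := cf_x_pow K n a a
    rw [show (fun j => truncX K n ^ j) a = truncX K n ^ a from rfl] at hab
    rw [hab, cf_x_pow, if_neg (by tauto), if_pos ⟨rfl, ha.1.2⟩] at h1
    exact one_ne_zero h1.symm
  have hsub : (↑(G.image (fun j => truncX K n ^ j)) : Set (TruncPoly K n)) ⊆ Set.range (bb K n) := by
    intro y hy
    simp only [Finset.coe_image, Set.mem_image, Finset.mem_coe] at hy
    obtain ⟨j, hj, rfl⟩ := hy
    simp only [hG, Finset.mem_erase, Finset.mem_Icc] at hj
    exact ⟨⟨j, by omega⟩, bb_apply K n ⟨j, by omega⟩⟩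
  have hli : LinearIndependent K ((↑) : ↑(G.image (fun j => truncX K n ^ j))
      → TruncPoly K n) :=
    ((bb K n).linearIndependent.linearIndepOn_id.mono hsub).linearIndependent
  rw [finrank_span_finset_eq_card hli, Finset.card_image_of_injOn hinj, hG,
    Finset.card_erase_of_mem (Finset.mem_Icc.mpr ⟨hi1, hin⟩), Nat.card_Icc]
  omega

lemma adjoin_U (i : ℕ) (hi1 : 1 < i) (hin : i ≤ n) (hn : 1 ≤ n) :
    Algebra.adjoin K ((Submodule.span K
      ((fun j : ℕ => truncX K n ^ j) '' {j : ℕ | 1 ≤ j ∧ j ≤ n ∧ j ≠ i}) :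
        Submodule K (TruncPoly K n)) : Set (TruncPoly K n)) = ⊤ := by
  have hxU : truncX K n ∈ Submodule.span K
      ((fun j : ℕ => truncX K n ^ j) '' {j : ℕ | 1 ≤ j ∧ j ≤ n ∧ j ≠ i}) := by
    exact Submodule.subset_span ⟨1, ⟨le_refl 1, hn, by omega⟩, pow_one _⟩
  rw [eq_top_iff]
  intro z _
  obtain ⟨p, rfl⟩ := Ideal.Quotient.mk_surjective (I := Ideal.span
    {(Polynomial.X : Polynomial K) ^ (n + 1)}) z
  have key : (Ideal.Quotient.mk (Ideal.span {(Polynomial.X : Polynomial K) ^ (n + 1)})) p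
      = Polynomial.aeval (truncX K n) p := by
    calc (Ideal.Quotient.mk (Ideal.span {(Polynomial.X : Polynomial K) ^ (n + 1)})) p
        = (Ideal.Quotient.mkₐ K (Ideal.span {(Polynomial.X : Polynomial K) ^ (n + 1)}))
            (Polynomial.aeval Polynomial.X p) := by
          rw [Polynomial.aeval_X_left_apply]; rfl
      _ = Polynomial.aeval ((Ideal.Quotient.mkₐ K (Ideal.span
            {(Polynomial.X : Polynomial K) ^ (n + 1)})) Polynomial.X) p :=
          (Polynomial.aeval_algHom_apply _ _ _).symm
      _ = Polynomial.aeval (truncX K n) p := rfl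
  rw [key]
  have : Polynomial.aeval (truncX K n) p ∈ Algebra.adjoin K {truncX K n} := by
    rw [Algebra.adjoin_singleton_eq_range_aeval]
    exact ⟨p, rfl⟩
  exact Algebra.adjoin_mono (Set.singleton_subset_iff.mpr hxU) this


lemma smul_xpow_mem (t : K) (j : ℕ) (hj : 1 ≤ j) :
    t • truncX K n ^ j ∈ Ideal.span {truncX K n} := by
  have h := pow_smul_mem_Mpow K n t j
  have h2 : (Ideal.span {truncX K n}) ^ j ≤ (Ideal.span {truncX K n}) ^ 1 :=
    Ideal.pow_le_pow_right hj
  rw [pow_one] at h2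
  exact h2 h

end Stmt12

open Stmt12

set_option synthInstance.maxHeartbeats 1000000 in
set_option maxHeartbeats 2000000 in
/-- Let `n ≥ 2`, `A = K[x]/(x^{n+1})` with maximal ideal `m = (x)`, and
for `1 < i ≤ n` let `U_i = span{x, …, x^{i−1}, x^{i+1}, …, x^n}`; then `(A, U_i)` is an
`H`-pair of degree `i`.  The boundary set `B = {z ∈ m : z ≠ 0, z^i ∈ U_i}` has only
finitely many `U_i`-equivalence classes if and only if `i = n−1` or `i = n`. -/
theorem stmt_12 (K : Type*) [Field K] [IsAlgClosed K] [CharZero K]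
    (n : ℕ) (hn : 2 ≤ n) (i : ℕ) (hi1 : 1 < i) (hin : i ≤ n) :
    (∀ z : TruncPoly K n, IsUnit z ∨ z ∈ Ideal.span {truncX K n}) ∧
    (Submodule.span K ((fun j : ℕ => truncX K n ^ j) '' {j : ℕ | 1 ≤ j ∧ j ≤ n ∧ j ≠ i})
        ≤ (Ideal.span {truncX K n}).restrictScalars K) ∧
    Module.finrank K (Submodule.span K
        ((fun j : ℕ => truncX K n ^ j) '' {j : ℕ | 1 ≤ j ∧ j ≤ n ∧ j ≠ i})) = n - 1 ∧
    Algebra.adjoin K ((Submodule.span K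
        ((fun j : ℕ => truncX K n ^ j) '' {j : ℕ | 1 ≤ j ∧ j ≤ n ∧ j ≠ i}) :
          Submodule K (TruncPoly K n)) : Set (TruncPoly K n)) = ⊤ ∧
    ¬ ((Ideal.span {truncX K n} ^ i).restrictScalars K ≤ Submodule.span K
        ((fun j : ℕ => truncX K n ^ j) '' {j : ℕ | 1 ≤ j ∧ j ≤ n ∧ j ≠ i})) ∧
    (∀ k : ℕ, i < k → (Ideal.span {truncX K n} ^ k).restrictScalars K ≤ Submodule.span K
        ((fun j : ℕ => truncX K n ^ j) '' {j : ℕ | 1 ≤ j ∧ j ≤ n ∧ j ≠ i})) ∧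
    ((∃ F : Finset (TruncPoly K n), ∀ z : TruncPoly K n,
        z ∈ Ideal.span {truncX K n} → z ≠ 0 →
        z ^ i ∈ Submodule.span K
          ((fun j : ℕ => truncX K n ^ j) '' {j : ℕ | 1 ≤ j ∧ j ≤ n ∧ j ≠ i}) →
        ∃ w ∈ F, ∃ u ∈ Submodule.span K
            ((fun j : ℕ => truncX K n ^ j) '' {j : ℕ | 1 ≤ j ∧ j ≤ n ∧ j ≠ i}),
          ∃ lam : K, lam ≠ 0 ∧ expn K u * z = lam • w)
      ↔ (i = n - 1 ∨ i = n)) := by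
  have hii1 : 1 ≤ i := by omega
  refine ⟨?_, U_le_M K n i hii1 hin, finrank_U K n i hii1 hin,
    adjoin_U K n i hi1 hin (by omega), ?_, fun k hk => Mpow_le_U K n i hii1 hin k hk, ?_, ?_⟩
  · intro z
    by_cases h : cf K n 0 z = 0
    · exact Or.inr ((mem_M_iff K n).mpr h)
    · exact Or.inl (isUnit_of_cf0 K n h)
  · intro hle
    have hx : truncX K n ∈ Ideal.span {truncX K n} := Ideal.mem_span_singleton_self _
    have h1 : truncX K n ^ i ∈ ((Ideal.span {truncX K n}) ^ i).restrictScalars K := by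
      rw [Submodule.restrictScalars_mem]
      exact Ideal.pow_mem_pow hx i
    have h2 := ((mem_U_iff K n i hii1 hin).mp (hle h1)).2
    have h3 := cf_x_pow K n i i
    rw [if_pos ⟨rfl, hin⟩, h2] at h3
    exact one_ne_zero h3.symm
  · -- mp direction
    rintro ⟨F, hF⟩
    by_contra hcon
    push_neg at hcon
    obtain ⟨hne1, hne2⟩ := hcon
    have hi2 : i + 2 ≤ n := by omega
    have hx2 : truncX K n ^ 2 ∈ Ideal.span {truncX K n} := by
      rw [pow_two]
      exact Ideal.mul_mem_left _ _ (Ideal.mem_span_singleton_self _)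
    have htxi : ∀ t : K, t • truncX K n ^ i ∈ Ideal.span {truncX K n} :=
      fun t => smul_xpow_mem K n t i (by omega)
    have hprop : ∀ t : K, ∃ w ∈ F, ∃ u ∈ Submodule.span K
        ((fun j : ℕ => truncX K n ^ j) '' {j : ℕ | 1 ≤ j ∧ j ≤ n ∧ j ≠ i}),
        ∃ lam : K, lam ≠ 0 ∧
          expn K u * (truncX K n ^ 2 * expn K (t • truncX K n ^ i)) = lam • w := by
      intro t
      apply hF
      · exact Ideal.mul_mem_right _ _ hx2
      · intro h0
        have h1 := cf_xpow_mul K n 2 0 (by omega) (expn K (t • truncX K n ^ i))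
        rw [h0, map_zero, cf0_expn K n (htxi t)] at h1
        exact one_ne_zero h1.symm
      · have hz2 : truncX K n ^ 2 * expn K (t • truncX K n ^ i)
            ∈ (Ideal.span {truncX K n}) ^ 2 :=
          Ideal.mul_mem_right _ _ (Ideal.pow_mem_pow (Ideal.mem_span_singleton_self _) 2)
        have hzi := Ideal.pow_mem_pow hz2 i
        rw [← pow_mul] at hzi
        apply Mpow_le_U K n i hii1 hin (2 * i) (by omega)
        rw [Submodule.restrictScalars_mem]
        exact hzi
    choose w hwF u huU lam hlam heq using hprop
    obtain ⟨t, s, hts, hws⟩ := Finite.exists_ne_map_eq_of_infinite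
      (fun t : K => (⟨w t, hwF t⟩ : {a // a ∈ F}))
    have hws' : w t = w s := congrArg Subtype.val hws
    have hUM := U_le_M K n i hii1 hin
    have hutM : (u t : TruncPoly K n) ∈ Ideal.span {truncX K n} := by
      have := hUM (huU t)
      rwa [Submodule.restrictScalars_mem] at this
    have husM : (u s : TruncPoly K n) ∈ Ideal.span {truncX K n} := by
      have := hUM (huU s)
      rwa [Submodule.restrictScalars_mem] at this
    have hat : u t + t • truncX K n ^ i ∈ Ideal.span {truncX K n} := add_mem hutM (htxi t)
    have hbs : u s + s • truncX K n ^ i ∈ Ideal.span {truncX K n} := add_mem husM (htxi s)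
    have e1 : truncX K n ^ 2 * expn K (u t + t • truncX K n ^ i) = lam t • w t := by
      rw [← expn_add K n hutM (htxi t), ← heq t]
      ring
    have e2 : truncX K n ^ 2 * expn K (u s + s • truncX K n ^ i) = lam s • w s := by
      rw [← expn_add K n husM (htxi s), ← heq s]
      ring
    set d := (u t + t • truncX K n ^ i) - (u s + s • truncX K n ^ i) with hd
    have hdM : d ∈ Ideal.span {truncX K n} := sub_mem hat hbs
    have c1 : lam s • (truncX K n ^ 2 * expn K (u t + t • truncX K n ^ i))
        = lam t • (truncX K n ^ 2 * expn K (u s + s • truncX K n ^ i)) := by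
      rw [e1, e2, hws', smul_comm]
    have c2 : lam s • (truncX K n ^ 2 * expn K d) = lam t • truncX K n ^ 2 := by
      have hnb : -(u s + s • truncX K n ^ i) ∈ Ideal.span {truncX K n} := neg_mem hbs
      have c1' := congrArg (fun y => y * expn K (-(u s + s • truncX K n ^ i))) c1
      simp only [smul_mul_assoc, mul_assoc] at c1'
      rw [expn_add K n hat hnb, expn_add K n hbs hnb, add_neg_cancel, expn_zero, mul_one,
        (show (u t + t • truncX K n ^ i) + -(u s + s • truncX K n ^ i) = d by rw [hd]; ring)]
        at c1'
      exact c1'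
    have c3 : lam s = lam t := by
      have h1 := congrArg (cf K n 2) c2
      rw [map_smul, map_smul] at h1
      have h2 := cf_xpow_mul K n 2 0 (by omega) (expn K d)
      rw [cf0_expn K n hdM] at h2
      have h3 := cf_x_pow K n 2 2
      rw [if_pos ⟨rfl, by omega⟩] at h3
      rw [h2, h3] at h1
      simpa using h1
    rw [c3] at c2
    have c4 : truncX K n ^ 2 * expn K d = truncX K n ^ 2 := by
      have h := congrArg (fun y => (lam t)⁻¹ • y) c2
      simpa [smul_smul, inv_mul_cancel₀ (hlam t)] using h
    have c5 : truncX K n ^ 2 * d = 0 := by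
      obtain ⟨g, hg, hg0⟩ := expn_factor K n hdM
      have h6 : (truncX K n ^ 2 * d) * g = 0 := by
        have := c4
        rw [hg] at this
        linear_combination this
      have hunit : IsUnit g := isUnit_of_cf0 K n (by rw [hg0]; exact one_ne_zero)
      exact (hunit.mul_left_eq_zero).mp h6
    have c6 : cf K n i d = 0 := by
      have h7 := cf_xpow_mul K n 2 i (by omega) d
      rw [c5, map_zero] at h7
      exact h7.symm
    have c7 : cf K n i d = t - s := by
      rw [hd]
      simp only [map_sub, map_add, map_smul]
      rw [((mem_U_iff K n i hii1 hin).mp (huU t)).2, ((mem_U_iff K n i hii1 hin).mp (huU s)).2]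
      have h8 := cf_x_pow K n i i
      rw [if_pos ⟨rfl, hin⟩] at h8
      rw [h8]
      simp
    rw [c7] at c6
    exact hts (sub_eq_zero.mp c6)
  · -- mpr direction
    intro hcase
    classical
    refine ⟨(Finset.Icc 2 n).image (fun k => truncX K n ^ k), ?_⟩
    intro z hzM hz0 hzU
    have hc0 : cf K n 0 z = 0 := (mem_M_iff K n).mp hzM
    have hc1 : cf K n 1 z = 0 := by
      have h1 := cf_pow_self K n hzM i (by omega) hin
      have h2 := ((mem_U_iff K n i hii1 hin).mp hzU).2
      rw [h2] at h1
      exact pow_eq_zero_iff (show i ≠ 0 by omega) |>.mp h1.symm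
    obtain ⟨k, hkn, hk0, hkmin⟩ := exists_least K n hz0
    have hk2 : 2 ≤ k := by
      rcases Nat.lt_or_ge k 2 with h | h
      · interval_cases k
        · exact absurd hc0 hk0
        · exact absurd hc1 hk0
      · exact h
    have hmem : z - cf K n k z • truncX K n ^ k
        ∈ (Ideal.span {truncX K n}) ^ (n + 1 - (n - k)) := by
      have hkk : n + 1 - (n - k) = k + 1 := by omega
      rw [hkk, mem_Mpow]
      intro j hj hjk
      rw [map_sub, map_smul, cf_x_pow]
      by_cases hjk' : j = k
      · subst hjk'
        rw [if_pos ⟨rfl, hkn⟩]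
        simp
      · rw [hkmin j (by omega), if_neg (by tauto)]
        simp
    obtain ⟨uu, huV, hueq⟩ := kill K n k (by omega) (n - k) (by omega) z (cf K n k z) hk0 hmem
    have hVU : Submodule.span K ((fun j : ℕ => truncX K n ^ j) '' Set.Icc 1 (n - k))
        ≤ Submodule.span K
          ((fun j : ℕ => truncX K n ^ j) '' {j : ℕ | 1 ≤ j ∧ j ≤ n ∧ j ≠ i}) := by
      apply Submodule.span_mono
      apply Set.image_mono
      intro j hj
      simp only [Set.mem_Icc] at hj
      have : n - 1 ≤ i := by rcases hcase with h | h <;> omega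
      exact ⟨hj.1, by omega, by omega⟩
    exact ⟨truncX K n ^ k, Finset.mem_image_of_mem _ (Finset.mem_Icc.mpr ⟨hk2, hkn⟩),
      uu, hVU huV, cf K n k z, hk0, hueq⟩
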